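/- If, in addition to the congestion game payoff structure, the resource reward function w_r is strictly decreasing for every r ∈ R, then the equilibrium resource flows are unique: for any two Nash equilibria x, y of the steady-state congestion game 𝓕, one has σ_r(x) = σ_r(y) for every r ∈ R. -/
import Mathlib


open Finset

variable {C : Type*} {S U : C → Type*} {R : Type*}

/-- Steady-state flow on resource `r` induced by the marginal policy distribution `x`. -/
def sigmaX [Fintype C] [∀ c, Fintype (S c)] [∀ c, Fintype (U c)] [Fintype R] [DecidableEq R]
    (lam : ℝ) (use : (c : C) → U c → S c → Finset R) (η : (c : C) → U c → S c → ℝ)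
    (x : (c : C) → U c → ℝ) (r : R) : ℝ :=
  lam * ∑ c, ∑ s, ∑ u, if r ∈ use c u s then η c u s * x c u else 0

/-- Steady-state congestion payoff of policy `u` of class `c`. -/
noncomputable def Fcal [Fintype C] [∀ c, Fintype (S c)] [∀ c, Fintype (U c)]
    [Fintype R] [DecidableEq R]
    (lam : ℝ) (use : (c : C) → U c → S c → Finset R) (η : (c : C) → U c → S c → ℝ)
    (w : R → ℝ → ℝ) (x : (c : C) → U c → ℝ) (c : C) (u : U c) : ℝ :=
  ∑ s, η c u s * ∑ r ∈ use c u s, w r (sigmaX lam use η x r)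

/-- Auxiliary rearrangement identity. -/
lemma stmt9_key [Fintype C] [∀ c, Fintype (S c)] [∀ c, Fintype (U c)] [Fintype R] [DecidableEq R]
    (lam : ℝ) (use : (c : C) → U c → S c → Finset R) (η : (c : C) → U c → S c → ℝ)
    (z : (c : C) → U c → ℝ) (g : R → ℝ) :
    lam * ∑ c, ∑ u, z c u * ∑ s, η c u s * ∑ r ∈ use c u s, g r
      = ∑ r, sigmaX lam use η z r * g r := by
  have h1 : ∀ (c : C) (u : U c) (s : S c),
      (∑ r ∈ use c u s, g r) = ∑ r, if r ∈ use c u s then g r else 0 := by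
    intro c u s
    rw [Finset.sum_ite_mem, Finset.univ_inter]
  simp only [sigmaX, h1, Finset.mul_sum, Finset.sum_mul, ite_mul, zero_mul]
  rw [Finset.sum_comm]
  refine Finset.sum_congr rfl fun c _ => ?_
  conv_rhs => rw [Finset.sum_comm]
  conv_rhs => enter [2, s]; rw [Finset.sum_comm]
  conv_rhs => rw [Finset.sum_comm]
  refine Finset.sum_congr rfl fun u _ => ?_
  refine Finset.sum_congr rfl fun s _ => ?_
  refine Finset.sum_congr rfl fun r _ => ?_
  split <;> ring

/-- At a Nash equilibrium `x`, the total payoff against `Fcal x` is maximized by `x` itself. -/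
lemma stmt9_ne_max [Fintype C] [∀ c, Fintype (S c)] [∀ c, Fintype (U c)]
    [Fintype R] [DecidableEq R]
    (m : C → ℝ) (hm : ∀ c, 0 < m c) (lam : ℝ)
    (η : (c : C) → U c → S c → ℝ)
    (use : (c : C) → U c → S c → Finset R) (w : R → ℝ → ℝ)
    (x y : (c : C) → U c → ℝ)
    (hxX : ∀ c, (∀ u, 0 ≤ x c u) ∧ (∑ u, x c u) = m c)
    (hyX : ∀ c, (∀ u, 0 ≤ y c u) ∧ (∑ u, y c u) = m c)
    (hxNE : ∀ c (u : U c), 0 < x c u →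
        ∀ v, Fcal lam use η w x c v ≤ Fcal lam use η w x c u) :
    ∑ c, ∑ u, y c u * Fcal lam use η w x c u ≤ ∑ c, ∑ u, x c u * Fcal lam use η w x c u := by
  refine Finset.sum_le_sum fun c _ => ?_
  -- find a policy with positive mass under x
  have hex : ∃ u0 : U c, 0 < x c u0 := by
    by_contra h
    push_neg at h
    have : (∑ u, x c u) = 0 :=
      Finset.sum_eq_zero fun u _ => le_antisymm (h u) ((hxX c).1 u)
    rw [(hxX c).2] at this
    exact absurd this (ne_of_gt (hm c))
  obtain ⟨u0, hu0⟩ := hex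
  have hmax := hxNE c u0 hu0
  calc ∑ u, y c u * Fcal lam use η w x c u
      ≤ ∑ u, y c u * Fcal lam use η w x c u0 :=
        Finset.sum_le_sum fun u _ => mul_le_mul_of_nonneg_left (hmax u) ((hyX c).1 u)
    _ = (∑ u, y c u) * Fcal lam use η w x c u0 := by rw [Finset.sum_mul]
    _ = (∑ u, x c u) * Fcal lam use η w x c u0 := by rw [(hyX c).2, (hxX c).2]
    _ = ∑ u, x c u * Fcal lam use η w x c u0 := by rw [Finset.sum_mul]
    _ = ∑ u, x c u * Fcal lam use η w x c u := by
        refine Finset.sum_congr rfl fun u _ => ?_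
        rcases eq_or_lt_of_le ((hxX c).1 u) with h | h
        · rw [← h]; ring
        · rw [le_antisymm (hmax u) (hxNE c u h u0)]

/-- If every resource reward `w_r` is strictly decreasing, then the equilibrium
resource flows of the steady-state congestion game are unique: any two Nash equilibria induce
the same flow on every resource. -/
theorem stmt9 [Fintype C] [Nonempty C]
    [∀ c, Fintype (S c)] [∀ c, Nonempty (S c)]
    [∀ c, Fintype (U c)] [∀ c, Nonempty (U c)]
    [Fintype R] [DecidableEq R]
    (m : C → ℝ) (hm : ∀ c, 0 < m c) (lam : ℝ) (hlam : 0 < lam)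
    (η : (c : C) → U c → S c → ℝ)
    (hη0 : ∀ c (u : U c) s, 0 ≤ η c u s) (hη1 : ∀ c (u : U c), ∑ s, η c u s = 1)
    (use : (c : C) → U c → S c → Finset R)
    (w : R → ℝ → ℝ) (hw : ∀ r, Continuous (w r)) (hanti : ∀ r, StrictAnti (w r))
    (x y : (c : C) → U c → ℝ)
    (hxX : ∀ c, (∀ u, 0 ≤ x c u) ∧ (∑ u, x c u) = m c)
    (hyX : ∀ c, (∀ u, 0 ≤ y c u) ∧ (∑ u, y c u) = m c)
    (hxNE : ∀ c (u : U c), 0 < x c u →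
        ∀ v, Fcal lam use η w x c v ≤ Fcal lam use η w x c u)
    (hyNE : ∀ c (u : U c), 0 < y c u →
        ∀ v, Fcal lam use η w y c v ≤ Fcal lam use η w y c u) :
    ∀ r, sigmaX lam use η x r = sigmaX lam use η y r := by
  set σx := sigmaX lam use η x with hσx
  set σy := sigmaX lam use η y with hσy
  set Fx := Fcal lam use η w x with hFx
  set Fy := Fcal lam use η w y with hFy
  -- Step 1: the variational inequalities
  have h1 : ∑ c, ∑ u, y c u * Fx c u ≤ ∑ c, ∑ u, x c u * Fx c u :=
    stmt9_ne_max m hm lam η use w x y hxX hyX hxNE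
  have h2 : ∑ c, ∑ u, x c u * Fy c u ≤ ∑ c, ∑ u, y c u * Fy c u :=
    stmt9_ne_max m hm lam η use w y x hyX hxX hyNE
  -- Step 2: rewrite the combination via the key identity
  set g : R → ℝ := fun r => w r (σx r) - w r (σy r) with hg
  have hFdiff : ∀ c (u : U c), Fx c u - Fy c u = ∑ s, η c u s * ∑ r ∈ use c u s, g r := by
    intro c u
    rw [hFx, hFy, Fcal, Fcal, ← Finset.sum_sub_distrib]
    refine Finset.sum_congr rfl fun s _ => ?_
    rw [← mul_sub, ← Finset.sum_sub_distrib]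
  have hσdiff : ∀ r, sigmaX lam use η (fun c u => x c u - y c u) r = σx r - σy r := by
    intro r
    rw [hσx, hσy, sigmaX, sigmaX, sigmaX, ← mul_sub, ← Finset.sum_sub_distrib]
    congr 1
    refine Finset.sum_congr rfl fun c _ => ?_
    rw [← Finset.sum_sub_distrib]
    refine Finset.sum_congr rfl fun s _ => ?_
    rw [← Finset.sum_sub_distrib]
    refine Finset.sum_congr rfl fun u _ => ?_
    split <;> ring
  have hkey := stmt9_key lam use η (fun c u => x c u - y c u) g
  have hA : 0 ≤ ∑ c, ∑ u, (x c u - y c u) * (Fx c u - Fy c u) := by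
    have : ∑ c, ∑ u, (x c u - y c u) * (Fx c u - Fy c u)
        = (∑ c, ∑ u, x c u * Fx c u) - (∑ c, ∑ u, y c u * Fx c u)
          - ((∑ c, ∑ u, x c u * Fy c u) - (∑ c, ∑ u, y c u * Fy c u)) := by
      simp only [← Finset.sum_sub_distrib]
      refine Finset.sum_congr rfl fun c _ => ?_
      refine Finset.sum_congr rfl fun u _ => ?_
      ring
    rw [this]
    linarith
  have e : lam * ∑ c, ∑ u, (x c u - y c u) * (Fx c u - Fy c u)
      = ∑ r, (σx r - σy r) * g r := by
    calc lam * ∑ c, ∑ u, (x c u - y c u) * (Fx c u - Fy c u)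
        = lam * ∑ c, ∑ u, (x c u - y c u) * ∑ s, η c u s * ∑ r ∈ use c u s, g r := by
          congr 1
          refine Finset.sum_congr rfl fun c _ => ?_
          refine Finset.sum_congr rfl fun u _ => ?_
          rw [hFdiff c u]
      _ = ∑ r, sigmaX lam use η (fun c u => x c u - y c u) r * g r := hkey
      _ = ∑ r, (σx r - σy r) * g r :=
          Finset.sum_congr rfl fun r _ => by rw [hσdiff r]
  have hsum : 0 ≤ ∑ r, (σx r - σy r) * g r := by
    rw [← e]
    exact mul_nonneg hlam.le hA
  have hnp : ∀ r ∈ Finset.univ, (σx r - σy r) * g r ≤ 0 := by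
    intro r _
    rcases lt_trichotomy (σx r) (σy r) with h | h | h
    · have hgw : 0 < g r := sub_pos.mpr (hanti r h)
      nlinarith
    · simp [hg, h]
    · have hgw : g r < 0 := sub_neg.mpr (hanti r h)
      nlinarith
  have hzero : ∀ r ∈ Finset.univ, (σx r - σy r) * g r = 0 := by
    rw [← Finset.sum_eq_zero_iff_of_nonpos hnp]
    exact le_antisymm (Finset.sum_nonpos hnp) hsum
  intro r
  have h0 := hzero r (Finset.mem_univ r)
  rcases lt_trichotomy (σx r) (σy r) with h | h | h
  · have hgw : 0 < g r := sub_pos.mpr (hanti r h)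
    nlinarith
  · exact h
  · have hgw : g r < 0 := sub_neg.mpr (hanti r h)
    nlinarith
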